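/- arXiv:1801.04643 — 2 statements merged into one kernel-verified Lean document; each statement's English description precedes it below -/
import Mathlib

section
/- Let 0<|q|<1 and let s,t be positive integers. Then S(q^s; q^{-t}) = S(q^{s+t}; q^t), i.e. Σ_{n≥0}(1/(1-q^{s-tn}) - 1/(1-q^{-s-tn-t})) = Σ_{n≥0}(1/(1-q^{s+t+tn}) - 1/(1-q^{-s+tn})), provided all denominators are nonzero. -/
lemma key_inv (x : ℂ) (hx0 : x ≠ 0) (hx1 : x ≠ 1) :
    1 / (1 - x) + 1 / (1 - x⁻¹) = 1 := by
  have h1 : (1 : ℂ) - x ≠ 0 := sub_ne_zero.mpr (Ne.symm hx1)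
  have h2 : (1 : ℂ) - x⁻¹ ≠ 0 := by
    rw [sub_ne_zero]
    intro h
    exact hx1 (by field_simp at h; simp [h])
  have h3 : (1 : ℂ) - x⁻¹ = (x - 1) / x := by field_simp
  rw [h3, one_div_div]
  have h4 : x - 1 ≠ 0 := sub_ne_zero.mpr hx1
  field_simp
  ring

theorem stmt4 (q : ℂ) (hq0 : 0 < ‖q‖) (hq1 : ‖q‖ < 1) (s t : ℕ)
    (hs : 0 < s) (ht : 0 < t) (hst : ¬ t ∣ s)
    (hden : ∀ m : ℤ, m ≠ 0 → q ^ m ≠ 1) :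
    ∑' n : ℕ, (1 / (1 - q ^ ((s : ℤ) - t * n)) - 1 / (1 - q ^ (-(s : ℤ) - t * n - t)))
      = ∑' n : ℕ, (1 / (1 - q ^ ((s : ℤ) + t + t * n)) - 1 / (1 - q ^ (-(s : ℤ) + t * n))) := by
  have hq : q ≠ 0 := by
    intro h; simp [h] at hq0
  apply tsum_congr
  intro n
  have hA : (s : ℤ) - t * n ≠ 0 := by
    intro h
    apply hst
    have : (s : ℤ) = t * n := by linarith
    exact ⟨n, by exact_mod_cast this⟩
  have hB : (s : ℤ) + t + t * n ≠ 0 := by positivity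
  have e1 : (-(s : ℤ) - t * n - t) = -((s : ℤ) + t + t * n) := by ring
  have e2 : (-(s : ℤ) + t * n) = -((s : ℤ) - t * n) := by ring
  rw [e1, e2, zpow_neg, zpow_neg]
  have h1 := key_inv (q ^ ((s : ℤ) - t * n)) (zpow_ne_zero _ hq) (hden _ hA)
  have h2 := key_inv (q ^ ((s : ℤ) + t + t * n)) (zpow_ne_zero _ hq) (hden _ hB)
  linear_combination h1 - h2
end

section
/- For |q|<1, the identity Σ_{n∈ℤ} (-1)^n q^{n²+n}/(1+q^n)² = 2·Σ_{n∈ℤ} (-1)^n q^{n²+n}/(1+q^{3n})² − 4·Σ_{n∈ℤ} (-1)^n q^{n²+2n}/(1+q^{3n})² + 3·Σ_{n∈ℤ} (-1)^n q^{n²+3n}/(1+q^{3n})² holds. -/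
noncomputable def Fq (q : ℂ) (k : ℤ) (n : ℤ) : ℂ :=
  (-1) ^ n * q ^ (n ^ 2 + k * n) / (1 + q ^ (3 * n)) ^ 2

lemma neg_one_zpow_neg (n : ℤ) : ((-1 : ℂ)) ^ (-n) = (-1) ^ n := by
  rw [zpow_neg, inv_eq_of_mul_eq_one_left]
  rw [← mul_zpow]; norm_num

lemma Fq_neg (q : ℂ) (hq : q ≠ 0) (k n : ℤ) : Fq q k (-n) = Fq q (6 - k) n := by
  unfold Fq
  have h3 : q ^ (3 * n) ≠ 0 := zpow_ne_zero _ hq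
  have key : q ^ ((-n) ^ 2 + k * (-n))
      = q ^ (n ^ 2 + (6 - k) * n) * (q ^ (3 * n))⁻¹ * (q ^ (3 * n))⁻¹ := by
    rw [← zpow_neg, ← zpow_add₀ hq, ← zpow_add₀ hq]; congr 1; ring
  have hd : (1 : ℂ) + q ^ (3 * -n) = (1 + q ^ (3 * n)) * (q ^ (3 * n))⁻¹ := by
    rw [show (3 * -n) = -(3 * n) by ring, zpow_neg]
    field_simp
    ring
  rw [key, hd, neg_one_zpow_neg, mul_pow]
  rw [show (-1 : ℂ) ^ n * (q ^ (n ^ 2 + (6 - k) * n) * (q ^ (3 * n))⁻¹ * (q ^ (3 * n))⁻¹)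
      = ((-1) ^ n * q ^ (n ^ 2 + (6 - k) * n)) * ((q ^ (3 * n))⁻¹) ^ 2 by ring]
  exact mul_div_mul_right _ _ (pow_ne_zero 2 (inv_ne_zero h3))

lemma Fq_summable_nat (q : ℂ) (hq0 : q ≠ 0) (hq : ‖q‖ < 1) (k : ℤ) (hk : 1 ≤ k) :
    Summable (fun n : ℕ => Fq q k n) := by
  set r : ℝ := ‖q‖ with hr
  have hr0 : 0 < r := norm_pos_iff.mpr hq0
  have hr3 : r ^ 3 < 1 := by nlinarith [hr0.le, hq, sq_nonneg r]
  have hC' : (0:ℝ) < 1 - r ^ 3 := by linarith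
  have hC : (0:ℝ) < (1 - r ^ 3) ^ 2 := by positivity
  apply Summable.of_norm_bounded_eventually (g := fun n : ℕ => ((1 - r ^ 3) ^ 2)⁻¹ * r ^ n)
  · exact (summable_geometric_of_lt_one hr0.le hq).mul_left _
  · rw [Nat.cofinite_eq_atTop, Filter.eventually_atTop]
    refine ⟨1, fun n hn => ?_⟩
    have hn' : (1:ℤ) ≤ (n:ℤ) := by exact_mod_cast hn
    have hnorm : ‖Fq q k n‖ = r ^ ((n:ℤ) ^ 2 + k * n) / ‖1 + q ^ (3 * (n:ℤ))‖ ^ 2 := by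
      unfold Fq
      rw [norm_div, norm_mul, norm_zpow, norm_zpow, norm_pow, norm_neg, norm_one,
        one_zpow, one_mul]
    rw [hnorm]
    have hnum : r ^ ((n:ℤ) ^ 2 + k * n) ≤ r ^ n := by
      have : r ^ ((n:ℤ) ^ 2 + k * n) ≤ r ^ (n : ℤ) := by
        apply zpow_le_zpow_right_of_le_one₀ hr0 hq.le
        nlinarith
      rwa [zpow_natCast] at this
    have hden : 1 - r ^ 3 ≤ ‖1 + q ^ (3 * (n:ℤ))‖ := by
      have h1 : ‖q ^ (3 * (n:ℤ))‖ ≤ r ^ 3 := by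
        rw [norm_zpow]
        have : r ^ (3 * (n:ℤ)) ≤ r ^ (3:ℤ) := by
          apply zpow_le_zpow_right_of_le_one₀ hr0 hq.le
          nlinarith
        simpa using this
      have h2 : ‖(1:ℂ)‖ - ‖-(q ^ (3 * (n:ℤ)))‖ ≤ ‖(1:ℂ) - (-(q ^ (3 * (n:ℤ))))‖ :=
        norm_sub_norm_le _ _
      simp only [norm_one, norm_neg, sub_neg_eq_add] at h2
      linarith
    calc r ^ ((n:ℤ) ^ 2 + k * n) / ‖1 + q ^ (3 * (n:ℤ))‖ ^ 2
        ≤ r ^ n / (1 - r ^ 3) ^ 2 := by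
          apply div_le_div₀ (by positivity) hnum hC
          exact pow_le_pow_left₀ hC'.le hden 2
      _ = ((1 - r ^ 3) ^ 2)⁻¹ * r ^ n := by ring

set_option maxHeartbeats 1000000 in
lemma Fq_summable (q : ℂ) (hq0 : q ≠ 0) (hq : ‖q‖ < 1) (k : ℤ) (hk1 : 1 ≤ k)
    (hk5 : k ≤ 5) : Summable (Fq q k) := by
  apply Summable.of_nat_of_neg_add_one (Fq_summable_nat q hq0 hq k hk1)
  have : (fun n : ℕ => Fq q k (-(n + 1))) = fun n : ℕ => Fq q (6 - k) ((n + 1 : ℕ) : ℤ) := by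
    funext n
    rw [show (((n + 1 : ℕ)) : ℤ) = (n : ℤ) + 1 by push_cast; ring]
    exact Fq_neg q hq0 k ((n:ℤ) + 1)
  rw [this]
  exact (summable_nat_add_iff 1).mpr (Fq_summable_nat q hq0 hq (6 - k) (by omega))

lemma Fq_tsum_refl (q : ℂ) (hq0 : q ≠ 0) (k l : ℤ) (hkl : l = 6 - k) :
    ∑' n : ℤ, Fq q k n = ∑' n : ℤ, Fq q l n := by
  subst hkl
  calc ∑' n : ℤ, Fq q k n = ∑' n : ℤ, Fq q (6 - k) (-n) := by
        apply tsum_congr; intro n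
        rw [Fq_neg q hq0 (6 - k) n]
        norm_num
    _ = ∑' n : ℤ, Fq q (6 - k) n := (Equiv.neg ℤ).tsum_eq _

theorem stmt16 (q : ℂ) (hq0 : 0 < ‖q‖) (hq : ‖q‖ < 1)
    (hden : ∀ m : ℤ, q ^ m ≠ -1) :
    (∑' n : ℤ, (-1 : ℂ) ^ n * q ^ (n ^ 2 + n) / (1 + q ^ n) ^ 2)
      = 2 * (∑' n : ℤ, (-1 : ℂ) ^ n * q ^ (n ^ 2 + n) / (1 + q ^ (3 * n)) ^ 2)
        - 4 * (∑' n : ℤ, (-1 : ℂ) ^ n * q ^ (n ^ 2 + 2 * n) / (1 + q ^ (3 * n)) ^ 2)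
        + 3 * (∑' n : ℤ, (-1 : ℂ) ^ n * q ^ (n ^ 2 + 3 * n) / (1 + q ^ (3 * n)) ^ 2) := by
  have hq' : q ≠ 0 := by simpa using hq0.ne'
  have hne : ∀ m : ℤ, (1 : ℂ) + q ^ m ≠ 0 := by
    intro m h
    exact hden m (by linear_combination h)
  -- pointwise decomposition
  have hpt : ∀ n : ℤ, (-1 : ℂ) ^ n * q ^ (n ^ 2 + n) / (1 + q ^ n) ^ 2
      = Fq q 1 n - 2 * Fq q 2 n + 3 * Fq q 3 n - 2 * Fq q 4 n + Fq q 5 n := by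
    intro n
    have hx : q ^ n ≠ 0 := zpow_ne_zero _ hq'
    have hx3 : q ^ (3 * n) = (q ^ n) ^ 3 := by
      rw [show (3 * n) = n * 3 by ring, zpow_mul,
        show ((3:ℤ)) = ((3:ℕ):ℤ) by norm_num, zpow_natCast]
    have e1 : q ^ (n ^ 2 + 1 * n) = q ^ (n ^ 2 + n) := by congr 1; ring
    have e2 : q ^ (n ^ 2 + 2 * n) = q ^ (n ^ 2 + n) * q ^ n := by
      rw [← zpow_add₀ hq']; congr 1; ring
    have e3 : q ^ (n ^ 2 + 3 * n) = q ^ (n ^ 2 + n) * (q ^ n) ^ (2:ℕ) := by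
      rw [← zpow_natCast (q ^ n) 2, ← zpow_mul, ← zpow_add₀ hq']; congr 1; push_cast; ring
    have e4 : q ^ (n ^ 2 + 4 * n) = q ^ (n ^ 2 + n) * (q ^ n) ^ (3:ℕ) := by
      rw [← zpow_natCast (q ^ n) 3, ← zpow_mul, ← zpow_add₀ hq']; congr 1; push_cast; ring
    have e5 : q ^ (n ^ 2 + 5 * n) = q ^ (n ^ 2 + n) * (q ^ n) ^ (4:ℕ) := by
      rw [← zpow_natCast (q ^ n) 4, ← zpow_mul, ← zpow_add₀ hq']; congr 1; push_cast; ring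
    have h1 : (1 : ℂ) + q ^ n ≠ 0 := hne n
    have h3 : (1 : ℂ) + (q ^ n) ^ 3 ≠ 0 := by rw [← hx3]; exact hne _
    unfold Fq
    rw [hx3, e1, e2, e3, e4, e5]
    field_simp
    ring
  have S1 := Fq_summable q hq' hq 1 (by norm_num) (by norm_num)
  have S2 := Fq_summable q hq' hq 2 (by norm_num) (by norm_num)
  have S3 := Fq_summable q hq' hq 3 (by norm_num) (by norm_num)
  have S4 := Fq_summable q hq' hq 4 (by norm_num) (by norm_num)
  have S5 := Fq_summable q hq' hq 5 (by norm_num) (by norm_num)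
  have hL : (∑' n : ℤ, (-1 : ℂ) ^ n * q ^ (n ^ 2 + n) / (1 + q ^ n) ^ 2)
      = (∑' n, Fq q 1 n) - 2 * (∑' n, Fq q 2 n) + 3 * (∑' n, Fq q 3 n)
        - 2 * (∑' n, Fq q 4 n) + (∑' n, Fq q 5 n) := by
    rw [tsum_congr hpt]
    rw [Summable.tsum_add (((S1.sub (S2.mul_left 2)).add (S3.mul_left 3)).sub (S4.mul_left 2)) S5,
      Summable.tsum_sub ((S1.sub (S2.mul_left 2)).add (S3.mul_left 3)) (S4.mul_left 2),
      Summable.tsum_add (S1.sub (S2.mul_left 2)) (S3.mul_left 3),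
      Summable.tsum_sub S1 (S2.mul_left 2),
      tsum_mul_left, tsum_mul_left, tsum_mul_left]
  have R1 : (∑' n : ℤ, (-1 : ℂ) ^ n * q ^ (n ^ 2 + n) / (1 + q ^ (3 * n)) ^ 2)
      = ∑' n, Fq q 1 n := by
    apply tsum_congr; intro n; unfold Fq; norm_num
  have R2 : (∑' n : ℤ, (-1 : ℂ) ^ n * q ^ (n ^ 2 + 2 * n) / (1 + q ^ (3 * n)) ^ 2)
      = ∑' n, Fq q 2 n := by
    apply tsum_congr; intro n; unfold Fq; norm_num
  have R3 : (∑' n : ℤ, (-1 : ℂ) ^ n * q ^ (n ^ 2 + 3 * n) / (1 + q ^ (3 * n)) ^ 2)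
      = ∑' n, Fq q 3 n := by
    apply tsum_congr; intro n; unfold Fq; norm_num
  rw [hL, R1, R2, R3, Fq_tsum_refl q hq' 5 1 (by norm_num), Fq_tsum_refl q hq' 4 2 (by norm_num)]
  ring
end
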